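/- Let 𝓕 ⊆ ([n] choose k) be a family such that |A∩B| + |B∩C| + |C∩A| ≥ 2 for all A, B, C ∈ 𝓕, and suppose there exist disjoint A, B ∈ 𝓕. Then every set C ∈ 𝓕 contains at least 2 elements of A ∪ B, and consequently |𝓕| ≤ C(2k, 2)·C(n, k−2). -/

import Mathlib

/-- `d A B C = |A∩B| + |B∩C| + |C∩A|`. -/
def dd (A B C : Finset ℕ) : ℕ := (A ∩ B).card + (B ∩ C).card + (C ∩ A).card

theorem stmt11 (n k : ℕ) (𝓕 : Finset (Finset ℕ))
    (h𝓕 : 𝓕 ⊆ (Finset.Icc 1 n).powersetCard k)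
    (hd : ∀ A ∈ 𝓕, ∀ B ∈ 𝓕, ∀ C ∈ 𝓕, 2 ≤ dd A B C)
    (A B : Finset ℕ) (hA : A ∈ 𝓕) (hB : B ∈ 𝓕) (hAB : Disjoint A B) :
    (∀ C ∈ 𝓕, 2 ≤ (C ∩ (A ∪ B)).card) ∧
    𝓕.card ≤ (2 * k).choose 2 * n.choose (k - 2) := by
  classical
  have key : ∀ C ∈ 𝓕, 2 ≤ (C ∩ (A ∪ B)).card := by
    intro C hC
    have h := hd A hA B hB C hC
    have hAB0 : (A ∩ B).card = 0 := by
      simp [Finset.disjoint_iff_inter_eq_empty.mp hAB]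
    have hdisj : Disjoint (C ∩ A) (C ∩ B) :=
      Disjoint.mono (Finset.inter_subset_right) (Finset.inter_subset_right) hAB
    have : C ∩ (A ∪ B) = (C ∩ A) ∪ (C ∩ B) := Finset.inter_union_distrib_left C A B
    rw [this, Finset.card_union_of_disjoint hdisj]
    unfold dd at h
    rw [hAB0, Finset.inter_comm B C] at h
    omega
  refine ⟨key, ?_⟩
  have hcards : ∀ C ∈ 𝓕, C ⊆ Finset.Icc 1 n ∧ C.card = k := by
    intro C hC
    exact Finset.mem_powersetCard.mp (h𝓕 hC)
  have hchoose : ∀ C ∈ 𝓕, ∃ P, P ⊆ C ∩ (A ∪ B) ∧ P.card = 2 := by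
    intro C hC
    exact Finset.exists_subset_card_eq (key C hC)
  choose! P hP hPcard using hchoose
  have hcard :
      𝓕.card ≤ (((A ∪ B).powersetCard 2) ×ˢ ((Finset.Icc 1 n).powersetCard (k - 2))).card := by
    apply Finset.card_le_card_of_injOn (fun C => (P C, C \ P C))
    · intro C hC
      have hPC : P C ⊆ C := (hP C hC).trans Finset.inter_subset_left
      simp only [Finset.mem_coe, Finset.mem_product, Finset.mem_powersetCard]
      refine ⟨⟨(hP C hC).trans Finset.inter_subset_right, hPcard C hC⟩, ?_, ?_⟩
      · exact (Finset.sdiff_subset).trans (hcards C hC).1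
      · rw [Finset.card_sdiff_of_subset hPC, (hcards C hC).2, hPcard C hC]
    · intro C hC D hD heq
      simp only [Prod.mk.injEq] at heq
      have h1 : C = (C \ P C) ∪ P C := (Finset.sdiff_union_of_subset
        ((hP C hC).trans Finset.inter_subset_left)).symm
      have h2 : D = (D \ P D) ∪ P D := (Finset.sdiff_union_of_subset
        ((hP D hD).trans Finset.inter_subset_left)).symm
      rw [h1, heq.2, heq.1, ← h2]
  have hABcard : (A ∪ B).card = 2 * k := by
    rw [Finset.card_union_of_disjoint hAB, (hcards A hA).2, (hcards B hB).2]
    ring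
  calc 𝓕.card ≤ _ := hcard
    _ = (2 * k).choose 2 * n.choose (k - 2) := by
      rw [Finset.card_product, Finset.card_powersetCard, Finset.card_powersetCard,
        hABcard, Nat.card_Icc]
      simp
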